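/- Let $\mathcal{R}$ be an algebraic Kähler curvature tensor on $\mathbb{C}^n$, $n \geq 3$, satisfying NQOBC and with vanishing scalar curvature. Then $\mathcal{R} = 0$. -/

import Mathlib

open Finset

noncomputable section

/-- An algebraic Kähler curvature tensor on `ℂⁿ`: complex linear in the first and
third (unbarred) slots, conjugate linear in the second and fourth (barred) slots,
with the pair symmetry `R(X,Ȳ,Z,W̄) = R(Z,W̄,X,Ȳ)`, the Kähler symmetry
`R(X,Ȳ,Z,W̄) = R(Z,Ȳ,X,W̄)`, and the reality condition
`conj R(X,Ȳ,Z,W̄) = R(Y,X̄,W,Z̄)`. -/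
structure AKCT (n : ℕ) where
  R : (Fin n → ℂ) → (Fin n → ℂ) → (Fin n → ℂ) → (Fin n → ℂ) → ℂ
  smul_fst : ∀ (a : ℂ) (X Y Z W), R (a • X) Y Z W = a * R X Y Z W
  add_fst : ∀ (X X' Y Z W), R (X + X') Y Z W = R X Y Z W + R X' Y Z W
  smul_snd : ∀ (a : ℂ) (X Y Z W), R X (a • Y) Z W = (starRingEnd ℂ) a * R X Y Z W
  add_snd : ∀ (X Y Y' Z W), R X (Y + Y') Z W = R X Y Z W + R X Y' Z W
  pair_symm : ∀ (X Y Z W), R X Y Z W = R Z W X Y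
  kahler_symm : ∀ (X Y Z W), R X Y Z W = R Z Y X W
  conj_symm : ∀ (X Y Z W), (starRingEnd ℂ) (R X Y Z W) = R Y X W Z

/-- The standard Hermitian inner product on `ℂⁿ` (conjugate linear in the first slot). -/
def hermInner {n : ℕ} (v w : Fin n → ℂ) : ℂ := ∑ k, (starRingEnd ℂ) (v k) * w k

/-- A unitary frame of `ℂⁿ`. -/
def UnitaryFrame {n : ℕ} (e : Fin n → Fin n → ℂ) : Prop :=
  ∀ i j, hermInner (e i) (e j) = if i = j then 1 else 0

/-- An orthonormal (unitary) pair of vectors in `ℂⁿ`. -/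
def OrthPair {n : ℕ} (V W : Fin n → ℂ) : Prop :=
  hermInner V V = 1 ∧ hermInner W W = 1 ∧ hermInner V W = 0

/-- Nonnegative quadratic orthogonal bisectional curvature. -/
def NQOBC {n : ℕ} (𝓡 : AKCT n) : Prop :=
  ∀ e : Fin n → Fin n → ℂ, UnitaryFrame e →
    ∀ ξ : Fin n → ℝ,
      0 ≤ ∑ i, ∑ j, (𝓡.R (e i) (e i) (e j) (e j)).re * (ξ i - ξ j) ^ 2

/-- The `k`-th standard basis vector of `ℂⁿ`. -/
def stdVec {n : ℕ} (k : Fin n) : Fin n → ℂ := fun m => if m = k then 1 else 0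

/-- The scalar curvature of an algebraic Kähler curvature tensor
(computed in the standard basis). -/
def scalarCurv {n : ℕ} (𝓡 : AKCT n) : ℝ :=
  ∑ i, ∑ j, (𝓡.R (stdVec i) (stdVec i) (stdVec j) (stdVec j)).re

end

noncomputable section

/-! ### Auxiliary lemmas -/

namespace AKCT

variable {n : ℕ} (T : AKCT n)

lemma smul_trd (a : ℂ) (X Y Z W) : T.R X Y (a • Z) W = a * T.R X Y Z W := by
  rw [T.kahler_symm X Y (a • Z) W, T.smul_fst, T.kahler_symm Z Y X W]

lemma add_trd (X Y Z Z' W) : T.R X Y (Z + Z') W = T.R X Y Z W + T.R X Y Z' W := by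
  rw [T.kahler_symm X Y (Z + Z') W, T.add_fst, T.kahler_symm Z Y X W, T.kahler_symm Z' Y X W]

lemma smul_fth (a : ℂ) (X Y Z W) : T.R X Y Z (a • W) = (starRingEnd ℂ) a * T.R X Y Z W := by
  rw [T.pair_symm X Y Z (a • W), T.smul_snd, T.pair_symm Z W X Y]

lemma add_fth (X Y Z W W') : T.R X Y Z (W + W') = T.R X Y Z W + T.R X Y Z W' := by
  rw [T.pair_symm X Y Z (W + W'), T.add_snd, T.pair_symm Z W X Y, T.pair_symm Z W' X Y]

lemma zero_fst (Y Z W) : T.R 0 Y Z W = 0 := by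
  have := T.smul_fst 0 0 Y Z W; simpa using this

lemma zero_snd (X Z W) : T.R X 0 Z W = 0 := by
  have := T.smul_snd 0 X 0 Z W; simpa using this

lemma sum_fst {α : Type*} (s : Finset α) (f : α → (Fin n → ℂ)) (Y Z W) :
    T.R (∑ x ∈ s, f x) Y Z W = ∑ x ∈ s, T.R (f x) Y Z W := by
  classical
  induction s using Finset.induction_on with
  | empty => simpa using T.zero_fst Y Z W
  | insert x s hx ih => rw [Finset.sum_insert hx, T.add_fst, ih, Finset.sum_insert hx]

lemma sum_snd {α : Type*} (s : Finset α) (f : α → (Fin n → ℂ)) (X Z W) :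
    T.R X (∑ x ∈ s, f x) Z W = ∑ x ∈ s, T.R X (f x) Z W := by
  classical
  induction s using Finset.induction_on with
  | empty => simpa using T.zero_snd X Z W
  | insert x s hx ih => rw [Finset.sum_insert hx, T.add_snd, ih, Finset.sum_insert hx]

lemma conj_BB (X Z) : (starRingEnd ℂ) (T.R X X Z Z) = T.R X X Z Z := T.conj_symm X X Z Z

lemma im_BB (X Z) : (T.R X X Z Z).im = 0 := by
  have := T.conj_BB X Z
  have h2 := congrArg Complex.im this
  simp only [Complex.conj_im] at h2
  linarith

lemma re_BB (X Z) : ((T.R X X Z Z).re : ℂ) = T.R X X Z Z := by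
  rw [Complex.ext_iff]
  simp [T.im_BB]

end AKCT

section Trace

variable {n : ℕ} (T : AKCT n)

lemma expand_vec (v : Fin n → ℂ) : v = ∑ a, v a • stdVec a := by
  funext m
  simp only [Finset.sum_apply, Pi.smul_apply, stdVec, smul_eq_mul, mul_ite, mul_one, mul_zero]
  rw [Finset.sum_ite_eq Finset.univ m v]
  simp

lemma R_expand12 (v Z W) : T.R v v Z W
    = ∑ a, ∑ b, v a * (starRingEnd ℂ) (v b) * T.R (stdVec a) (stdVec b) Z W := by
  conv_lhs => rw [show T.R v v Z W
    = T.R (∑ a, v a • stdVec a) (∑ b, v b • stdVec b) Z W by rw [← expand_vec]]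
  rw [T.sum_fst]
  refine Finset.sum_congr rfl fun a _ => ?_
  rw [T.smul_fst, T.sum_snd, Finset.mul_sum]
  refine Finset.sum_congr rfl fun b _ => ?_
  rw [T.smul_snd]; ring

lemma col_orthonormal {e : Fin n → Fin n → ℂ} (he : UnitaryFrame e) (a b : Fin n) :
    ∑ i, e i a * (starRingEnd ℂ) (e i b) = if a = b then 1 else 0 := by
  classical
  set M : Matrix (Fin n) (Fin n) ℂ := fun i k => e i k with hM
  have h1 : M * M.conjTranspose = 1 := by
    ext i j
    have := he i j
    simp only [hermInner] at this
    simp only [Matrix.mul_apply, Matrix.conjTranspose_apply, Matrix.one_apply]; simp only [hM]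
    rw [show ∑ k, e i k * star (e j k) = (starRingEnd ℂ) (∑ k, (starRingEnd ℂ) (e i k) * e j k) by
      rw [map_sum]; refine Finset.sum_congr rfl fun k _ => ?_
      rw [map_mul, Complex.conj_conj]; rfl]
    rw [this]
    split_ifs with h
    · simp
    · simp
  have h2 : M.conjTranspose * M = 1 := mul_eq_one_comm.mp h1
  have h3 := congrFun (congrFun (congrArg (fun m => m) h2) b) a
  simp only [Matrix.mul_apply, Matrix.conjTranspose_apply, Matrix.one_apply] at h3; simp only [hM] at h3
  rw [show ∑ i, e i a * (starRingEnd ℂ) (e i b) = ∑ i, star (e i b) * e i a by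
    refine Finset.sum_congr rfl fun i _ => by rw [mul_comm]; rfl]
  rw [h3]
  split_ifs with h h' h'
  · simp
  · exact absurd h.symm h'
  · exact absurd h'.symm h
  · simp

/-- complex "Ricci" trace in the standard basis -/
def tauc (v : Fin n → ℂ) : ℂ := ∑ b, T.R v v (stdVec b) (stdVec b)

lemma trace_inv {e : Fin n → Fin n → ℂ} (he : UnitaryFrame e) (Z W) :
    ∑ i, T.R (e i) (e i) Z W = ∑ a, T.R (stdVec a) (stdVec a) Z W := by
  have : ∀ i, T.R (e i) (e i) Z W
      = ∑ a, ∑ b, e i a * (starRingEnd ℂ) (e i b) * T.R (stdVec a) (stdVec b) Z W :=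
    fun i => R_expand12 T (e i) Z W
  rw [Finset.sum_congr rfl fun i _ => this i]
  rw [Finset.sum_comm]
  refine Finset.sum_congr rfl fun a _ => ?_
  rw [Finset.sum_comm]
  have : ∀ b, ∑ i, e i a * (starRingEnd ℂ) (e i b) * T.R (stdVec a) (stdVec b) Z W
      = (if a = b then 1 else 0) * T.R (stdVec a) (stdVec b) Z W := by
    intro b
    rw [← Finset.sum_mul, col_orthonormal he]
  rw [Finset.sum_congr rfl fun b _ => this b]
  simp

lemma trace_inv2 {e : Fin n → Fin n → ℂ} (he : UnitaryFrame e) (v) :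
    ∑ q, T.R v v (e q) (e q) = tauc T v := by
  have : ∀ q, T.R v v (e q) (e q) = T.R (e q) (e q) v v := fun q => T.pair_symm _ _ _ _
  rw [Finset.sum_congr rfl fun q _ => this q, trace_inv T he, tauc]
  exact Finset.sum_congr rfl fun b _ => (T.pair_symm _ _ _ _).symm

lemma row_sum {e : Fin n → Fin n → ℂ} (he : UnitaryFrame e) (v) :
    ∑ q, (T.R v v (e q) (e q)).re = (tauc T v).re := by
  rw [← Complex.re_sum, trace_inv2 T he v]

lemma col_sum {e : Fin n → Fin n → ℂ} (he : UnitaryFrame e) (v) :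
    ∑ p, (T.R (e p) (e p) v v).re = (tauc T v).re := by
  rw [Finset.sum_congr rfl fun p (_ : p ∈ Finset.univ) =>
    congrArg Complex.re (T.pair_symm (e p) (e p) v v), row_sum T he v]

end Trace

section herm
variable {n : ℕ}

lemma hermInner_smul_left (c : ℂ) (v w : Fin n → ℂ) :
    hermInner (c • v) w = (starRingEnd ℂ) c * hermInner v w := by
  simp [hermInner, Finset.mul_sum, mul_assoc]

lemma hermInner_smul_right (c : ℂ) (v w : Fin n → ℂ) :
    hermInner v (c • w) = c * hermInner v w := by
  simp only [hermInner, Pi.smul_apply, smul_eq_mul, Finset.mul_sum]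
  exact Finset.sum_congr rfl fun k _ => by ring

lemma hermInner_add_left (u v w : Fin n → ℂ) :
    hermInner (u + v) w = hermInner u w + hermInner v w := by
  simp only [hermInner, Pi.add_apply, map_add, ← Finset.sum_add_distrib]
  exact Finset.sum_congr rfl fun k _ => by ring

lemma hermInner_add_right (u v w : Fin n → ℂ) :
    hermInner u (v + w) = hermInner u v + hermInner u w := by
  simp only [hermInner, Pi.add_apply, ← Finset.sum_add_distrib]
  exact Finset.sum_congr rfl fun k _ => by ring

lemma hermInner_conj (v w : Fin n → ℂ) :
    hermInner v w = (starRingEnd ℂ) (hermInner w v) := by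
  simp only [hermInner, map_sum, map_mul, Complex.conj_conj]
  exact Finset.sum_congr rfl fun k _ => by ring

end herm

/-- normalization constant `1/√2` -/
def sq2c : ℂ := ((Real.sqrt 2)⁻¹ : ℝ)

lemma sq2c_conj : (starRingEnd ℂ) sq2c = sq2c := Complex.conj_ofReal _

lemma sq2c_sq : sq2c * sq2c = 1/2 := by
  unfold sq2c
  rw [← Complex.ofReal_mul, ← mul_inv, Real.mul_self_sqrt (by norm_num)]
  norm_num

/-- the rotated frame -/
def rotF {n : ℕ} (e : Fin n → Fin n → ℂ) (i j : Fin n) (a : ℂ) : Fin n → Fin n → ℂ :=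
  fun k => if k = i then sq2c • (e i + a • e j)
           else if k = j then sq2c • (e i + (-a) • e j) else e k

section rot
variable {n : ℕ} {e : Fin n → Fin n → ℂ} {i j : Fin n}

lemma herm_comb (he : UnitaryFrame e) (hij : i ≠ j) (s t : ℂ) :
    hermInner (sq2c • (e i + s • e j)) (sq2c • (e i + t • e j))
      = (1 + (starRingEnd ℂ) s * t) / 2 := by
  rw [hermInner_smul_left, hermInner_smul_right, hermInner_add_left, hermInner_add_right,
    hermInner_add_right, hermInner_smul_left, hermInner_smul_right, hermInner_smul_right,
    hermInner_smul_left, he i i, he i j, he j i, he j j, sq2c_conj]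
  rw [if_pos rfl, if_pos rfl, if_neg hij, if_neg (Ne.symm hij)]
  linear_combination (1 + (starRingEnd ℂ) s * t) * sq2c_sq

lemma herm_mix (he : UnitaryFrame e) (s : ℂ) {m : Fin n} (hmi : m ≠ i) (hmj : m ≠ j) :
    hermInner (sq2c • (e i + s • e j)) (e m) = 0 := by
  rw [hermInner_smul_left, hermInner_add_left, hermInner_smul_left, he i m, he j m,
    if_neg (fun h => hmi h.symm), if_neg (fun h => hmj h.symm)]
  ring

lemma rotF_i (a : ℂ) : rotF e i j a i = sq2c • (e i + a • e j) := by simp [rotF]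

lemma rotF_j (hij : i ≠ j) (a : ℂ) : rotF e i j a j = sq2c • (e i + (-a) • e j) := by
  simp [rotF, Ne.symm hij, hij]

lemma rotF_other (a : ℂ) {m : Fin n} (hmi : m ≠ i) (hmj : m ≠ j) : rotF e i j a m = e m := by
  simp [rotF, hmi, hmj]

lemma rotF_unitary (he : UnitaryFrame e) (hij : i ≠ j) (a : ℂ)
    (ha : (starRingEnd ℂ) a * a = 1) : UnitaryFrame (rotF e i j a) := by
  intro k l
  by_cases hk : k = i
  · rw [hk, rotF_i]
    by_cases hl : l = i
    · rw [hl, rotF_i, herm_comb he hij a a, ha, if_pos rfl]; norm_num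
    · by_cases hl' : l = j
      · rw [hl', rotF_j hij, herm_comb he hij a (-a), if_neg hij, mul_neg, ha]; norm_num
      · rw [rotF_other a hl hl', herm_mix he a hl hl', if_neg (fun hh => hl hh.symm)]
  · by_cases hk' : k = j
    · rw [hk', rotF_j hij]
      by_cases hl : l = i
      · rw [hl, rotF_i, hermInner_conj, herm_comb he hij a (-a), mul_neg, ha,
          if_neg (Ne.symm hij)]
        norm_num
      · by_cases hl' : l = j
        · rw [hl', rotF_j hij, herm_comb he hij (-a) (-a), map_neg, neg_mul, mul_neg, neg_neg,
            ha, if_pos rfl]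
          norm_num
        · rw [rotF_other a hl hl', herm_mix he (-a) hl hl', if_neg (fun hh => hl' hh.symm)]
    · rw [rotF_other a hk hk']
      by_cases hl : l = i
      · rw [hl, rotF_i, hermInner_conj, herm_mix he a hk hk', map_zero, if_neg hk]
      · by_cases hl' : l = j
        · rw [hl', rotF_j hij, hermInner_conj, herm_mix he (-a) hk hk', map_zero, if_neg hk']
        · rw [rotF_other a hl hl', he k l]
end rot

section Qred
variable {n : ℕ}

lemma sum_sum_ite_left (f : Fin n → Fin n → ℝ) (k : Fin n) :
    ∑ p, ∑ q, (if p = k then f p q else 0) = ∑ q, f k q := by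
  have h : ∀ p : Fin n, ∑ q, (if p = k then f p q else 0) = if p = k then ∑ q, f p q else 0 :=
    fun p => by split_ifs <;> simp
  rw [Finset.sum_congr rfl fun p _ => h p, Finset.sum_ite_eq' Finset.univ k]
  simp

lemma sum_sum_ite_right (f : Fin n → Fin n → ℝ) (k : Fin n) :
    ∑ p, ∑ q, (if q = k then f p q else 0) = ∑ p, f p k := by
  refine Finset.sum_congr rfl fun p _ => ?_
  rw [Finset.sum_ite_eq' Finset.univ k (f p)]
  simp

lemma sum_sum_ite_both (f : Fin n → Fin n → ℝ) (k l : Fin n) :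
    ∑ p, ∑ q, (if p = k then (if q = l then f p q else 0) else 0) = f k l := by
  have h : ∀ p : Fin n, ∑ q, (if p = k then (if q = l then f p q else 0) else 0)
      = if p = k then f p l else 0 := fun p => by
    split_ifs with h
    · rw [Finset.sum_ite_eq' Finset.univ l (f p)]; simp
    · simp
  rw [Finset.sum_congr rfl fun p _ => h p, Finset.sum_ite_eq' Finset.univ k]
  simp

lemma Qred_single (r : Fin n → Fin n → ℝ) (k : Fin n) :
    ∑ p, ∑ q, r p q * ((if p = k then (1:ℝ) else 0) - (if q = k then (1:ℝ) else 0))^2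
      = (∑ q, r k q) + (∑ p, r p k) - 2 * r k k := by
  have key : ∀ p q, r p q * ((if p = k then (1:ℝ) else 0) - (if q = k then (1:ℝ) else 0))^2
      = (if p = k then r p q else 0) + (if q = k then r p q else 0)
        - 2 * (if p = k then (if q = k then r p q else 0) else 0) := by
    intro p q; split_ifs <;> ring
  simp only [key, Finset.sum_sub_distrib, Finset.sum_add_distrib, ← Finset.mul_sum,
    sum_sum_ite_left, sum_sum_ite_right, sum_sum_ite_both]
  simp only [Finset.sum_ite_eq, Finset.sum_ite_eq', Finset.mem_univ, if_true]
  try ring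

lemma Qred_pair (r : Fin n → Fin n → ℝ) (i j : Fin n) (hij : i ≠ j) :
    ∑ p, ∑ q, r p q * ((if p = i then (1:ℝ) else if p = j then -1 else 0)
        - (if q = i then (1:ℝ) else if q = j then -1 else 0))^2
      = (∑ q, r i q) + (∑ q, r j q) + (∑ p, r p i) + (∑ p, r p j)
        - 2 * (r i i + r j j - r i j - r j i) := by
  have key : ∀ p q, r p q * ((if p = i then (1:ℝ) else if p = j then -1 else 0)
        - (if q = i then (1:ℝ) else if q = j then -1 else 0))^2
      = ((if p = i then r p q else 0) + (if p = j then r p q else 0)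
        + (if q = i then r p q else 0) + (if q = j then r p q else 0))
        - 2 * ((if p = i then (if q = i then r p q else 0) else 0)
          + (if p = j then (if q = j then r p q else 0) else 0)
          - (if p = i then (if q = j then r p q else 0) else 0)
          - (if p = j then (if q = i then r p q else 0) else 0)) := by
    intro p q
    rcases eq_or_ne p i with h1 | h1 <;> rcases eq_or_ne p j with h2 | h2 <;>
      rcases eq_or_ne q i with h3 | h3 <;> rcases eq_or_ne q j with h4 | h4 <;>
      first
        | exact absurd (h1.symm.trans h2) hij
        | exact absurd (h3.symm.trans h4) hij
        | (simp [h1, h2, h3, h4, hij, Ne.symm hij]; try ring)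
  simp only [key, Finset.sum_sub_distrib, Finset.sum_add_distrib, ← Finset.mul_sum,
    sum_sum_ite_left, sum_sum_ite_right, sum_sum_ite_both]
  simp only [Finset.sum_ite_eq, Finset.sum_ite_eq', Finset.mem_univ, if_true]
  try ring

end Qred

section Expand
variable {n : ℕ} (T : AKCT n) {x : ℂ}

lemma L1 (hx : x * x = -1) (hxc : (starRingEnd ℂ) x = -x) (V W u : Fin n → ℂ) :
    T.R (V + (1:ℂ) • W) (V + (1:ℂ) • W) u u + T.R (V + (-1:ℂ) • W) (V + (-1:ℂ) • W) u u
      + T.R (V + x • W) (V + x • W) u u + T.R (V + (-x) • W) (V + (-x) • W) u u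
      = 4 * (T.R V V u u + T.R W W u u) := by
  simp only [T.add_fst, T.add_snd, T.smul_fst, T.smul_snd, map_one, map_neg, hxc]
  linear_combination (-2 * T.R W W u u) * hx

lemma L2 (hx : x * x = -1) (hxc : (starRingEnd ℂ) x = -x) (V W : Fin n → ℂ) :
    T.R (V + (1:ℂ) • W) (V + (1:ℂ) • W) (V + (1:ℂ) • W) (V + (1:ℂ) • W)
      + T.R (V + (-1:ℂ) • W) (V + (-1:ℂ) • W) (V + (-1:ℂ) • W) (V + (-1:ℂ) • W)
      + T.R (V + x • W) (V + x • W) (V + x • W) (V + x • W)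
      + T.R (V + (-x) • W) (V + (-x) • W) (V + (-x) • W) (V + (-x) • W)
      = 4 * T.R V V V V + 4 * T.R W W W W + 16 * T.R V V W W := by
  simp only [T.add_fst, T.add_snd, T.add_trd, T.add_fth, T.smul_fst, T.smul_snd,
    T.smul_trd, T.smul_fth, map_one, map_neg, hxc]
  linear_combination (4:ℂ) * T.kahler_symm W V V W + 4 * T.kahler_symm V W W V
    + 8 * T.pair_symm W W V V
    + (-2 * T.R V V W W + 2 * T.R V W V W - 2 * T.R V W W V - 2 * T.R W V V W
        + 2 * T.R W V W V - 2 * T.R W W V V + (2*x*x - 2) * T.R W W W W) * hx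

lemma L3 (hx : x * x = -1) (hxc : (starRingEnd ℂ) x = -x) (V W : Fin n → ℂ) :
    T.R (V + (1:ℂ) • W) (V + (1:ℂ) • W) (V + (-1:ℂ) • W) (V + (-1:ℂ) • W)
      + T.R (V + x • W) (V + x • W) (V + (-x) • W) (V + (-x) • W)
      = 2 * (T.R V V V V + T.R W W W W) := by
  simp only [T.add_fst, T.add_snd, T.add_trd, T.add_fth, T.smul_fst, T.smul_snd,
    T.smul_trd, T.smul_fth, map_one, map_neg, hxc]
  linear_combination (-1 + x) * T.pair_symm V V V W
    + (-1 - x) * T.kahler_symm V V W V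
    + (1 - x) * T.pair_symm V W W W
    + (1 + x) * T.pair_symm W V W W
    + (-2 : ℂ) * T.kahler_symm W V V W + (-2 : ℂ) * T.kahler_symm V W W V
    + (- T.R V V W W - T.R V W V W + T.R V W W V + x * T.R V W W W + T.R W V V W
        - T.R W V W V - x * T.R W V W W - T.R W W V V - x * T.R W W V W + x * T.R W W W V
        + (x*x - 1) * T.R W W W W) * hx

lemma L1sum (V W : Fin n → ℂ) :
    tauc T (V + (1:ℂ) • W) + tauc T (V + (-1:ℂ) • W) + tauc T (V + Complex.I • W)
      + tauc T (V + (-Complex.I) • W) = 4 * (tauc T V + tauc T W) := by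
  unfold tauc
  simp only [← Finset.sum_add_distrib, Finset.mul_sum]
  refine Finset.sum_congr rfl fun b _ => ?_
  linear_combination L1 T Complex.I_mul_I Complex.conj_I V W (stdVec b)

end Expand

section ScalarPull
variable {n : ℕ} (T : AKCT n)

lemma tauc_sq2c (v : Fin n → ℂ) :
    tauc T (sq2c • v) = (((1:ℝ)/2 : ℝ) : ℂ) * tauc T v := by
  unfold tauc
  rw [Finset.mul_sum]
  refine Finset.sum_congr rfl fun b _ => ?_
  rw [T.smul_fst, T.smul_snd, sq2c_conj]
  push_cast
  linear_combination T.R v v (stdVec b) (stdVec b) * sq2c_sq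

lemma quad_sq2c (v w : Fin n → ℂ) :
    T.R (sq2c • v) (sq2c • v) (sq2c • w) (sq2c • w)
      = (((1:ℝ)/4 : ℝ) : ℂ) * T.R v v w w := by
  rw [T.smul_fst, T.smul_snd, T.smul_trd, T.smul_fth, sq2c_conj]
  push_cast
  linear_combination ((sq2c * sq2c + 1/2) * T.R v v w w) * sq2c_sq

end ScalarPull

section XvalSection
variable {n : ℕ} (T : AKCT n) {e : Fin n → Fin n → ℂ} {i j : Fin n}

lemma Xval_eq (he : UnitaryFrame e) (hij : i ≠ j) (a : ℂ)
    (ha : (starRingEnd ℂ) a * a = 1) :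
    ∑ p, ∑ q, (T.R (rotF e i j a p) (rotF e i j a p) (rotF e i j a q) (rotF e i j a q)).re
      * ((if p = i then (1:ℝ) else if p = j then -1 else 0)
          - (if q = i then (1:ℝ) else if q = j then -1 else 0))^2
    = (tauc T (e i + a • e j)).re + (tauc T (e i + (-a) • e j)).re
      - (1/2) * (T.R (e i + a • e j) (e i + a • e j) (e i + a • e j) (e i + a • e j)).re
      - (1/2) * (T.R (e i + (-a) • e j) (e i + (-a) • e j) (e i + (-a) • e j)
          (e i + (-a) • e j)).re
      + (T.R (e i + a • e j) (e i + a • e j) (e i + (-a) • e j) (e i + (-a) • e j)).re := by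
  have hF : UnitaryFrame (rotF e i j a) := rotF_unitary he hij a ha
  have base := Qred_pair
    (fun p q => (T.R (rotF e i j a p) (rotF e i j a p) (rotF e i j a q) (rotF e i j a q)).re)
    i j hij
  rw [base, rotF_i, rotF_j hij]
  rw [row_sum T hF, row_sum T hF, col_sum T hF, col_sum T hF]
  rw [tauc_sq2c, tauc_sq2c, quad_sq2c, quad_sq2c, quad_sq2c, quad_sq2c]
  rw [show T.R (e i + (-a) • e j) (e i + (-a) • e j) (e i + a • e j) (e i + a • e j)
      = T.R (e i + a • e j) (e i + a • e j) (e i + (-a) • e j) (e i + (-a) • e j)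
    from T.pair_symm _ _ _ _]
  simp only [Complex.re_ofReal_mul]
  ring

lemma pairE (he : UnitaryFrame e) (h : NQOBC T) (hij : i ≠ j) :
    0 ≤ 4 * ((tauc T (e i)).re + (tauc T (e j)).re)
        - 8 * (T.R (e i) (e i) (e j) (e j)).re := by
  have ha1 : (starRingEnd ℂ) (1:ℂ) * 1 = 1 := by norm_num
  have haI : (starRingEnd ℂ) Complex.I * Complex.I = 1 := by
    rw [Complex.conj_I, neg_mul, Complex.I_mul_I]; norm_num
  have h1 := h _ (rotF_unitary he hij 1 ha1)
    (fun m => if m = i then (1:ℝ) else if m = j then -1 else 0)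
  have hI := h _ (rotF_unitary he hij Complex.I haI)
    (fun m => if m = i then (1:ℝ) else if m = j then -1 else 0)
  rw [Xval_eq T he hij 1 ha1] at h1
  rw [Xval_eq T he hij Complex.I haI] at hI
  -- complex identities
  have l1 := L1sum T (e i) (e j)
  have l2 := L2 T Complex.I_mul_I Complex.conj_I (e i) (e j)
  have l3 := L3 T Complex.I_mul_I Complex.conj_I (e i) (e j)
  have l1r := congrArg Complex.re l1
  have l2r := congrArg Complex.re l2
  have l3r := congrArg Complex.re l3
  simp only [Complex.add_re, Complex.mul_re, Complex.re_ofNat, Complex.im_ofNat, zero_mul,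
    sub_zero] at l1r l2r l3r
  linarith

end XvalSection

section FrameFlat

variable {n : ℕ} (T : AKCT n)

theorem frame_H_re_zero (hn : 3 ≤ n) (h : NQOBC T) (hS : scalarCurv T = 0)
    {e : Fin n → Fin n → ℂ} (he : UnitaryFrame e) (k : Fin n) :
    (T.R (e k) (e k) (e k) (e k)).re = 0 := by
  classical
  -- abbreviations as equations
  set t : Fin n → ℝ := fun p => (tauc T (e p)).re with ht
  set BB : Fin n → Fin n → ℝ := fun p q => (T.R (e p) (e p) (e q) (e q)).re with hBB
  set HH : Fin n → ℝ := fun p => (T.R (e p) (e p) (e p) (e p)).re with hHH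
  -- F1 : rows
  have F1 : ∀ p, ∑ q, BB p q = t p := fun p => row_sum T he (e p)
  -- F2 : trace is the scalar curvature, which vanishes
  have F2 : ∑ p, t p = 0 := by
    have hc : ∑ p, tauc T (e p)
        = ∑ b, ∑ a, T.R (stdVec b) (stdVec b) (stdVec a) (stdVec a) := by
      unfold tauc
      rw [Finset.sum_comm]
      refine Finset.sum_congr rfl fun b _ => ?_
      rw [Finset.sum_congr rfl fun p (_ : p ∈ Finset.univ) =>
        T.pair_symm (e p) (e p) (stdVec b) (stdVec b)]
      rw [trace_inv2 T he (stdVec b)]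
      rfl
    have hre := congrArg Complex.re hc
    rw [Complex.re_sum, Complex.re_sum] at hre
    rw [Finset.sum_congr rfl fun b (_ : b ∈ Finset.univ) => Complex.re_sum _ _] at hre
    simp only [ht]
    rw [hre]
    exact hS
  -- F3 : single-vector inequality
  have F3 : ∀ p, 0 ≤ t p - HH p := by
    intro p
    have h0 := h e he (fun m => if m = p then (1:ℝ) else 0)
    have base := Qred_single (fun a b => (T.R (e a) (e a) (e b) (e b)).re) p
    rw [base, row_sum T he (e p), col_sum T he (e p)] at h0
    simp only [ht, hBB, hHH]
    linarith
  -- F4 : pair inequality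
  have F4 : ∀ p q, p ≠ q → 0 ≤ 4 * (t p + t q) - 8 * BB p q := by
    intro p q hpq
    exact pairE T he h hpq
  -- master identity
  have inner : ∀ p, ∑ q ∈ Finset.univ.erase p, (4 * (t p + t q) - 8 * BB p q)
      = (4 * (n:ℝ) - 16) * t p + 8 * HH p := by
    intro p
    have hsplit : ∑ q ∈ Finset.univ.erase p, (4 * (t p + t q) - 8 * BB p q)
        = ∑ q ∈ Finset.univ.erase p, (4 * t p + 4 * t q - 8 * BB p q) :=
      Finset.sum_congr rfl fun q _ => by ring
    rw [hsplit, Finset.sum_sub_distrib, Finset.sum_add_distrib]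
    have c1 : ∑ _q ∈ Finset.univ.erase p, 4 * t p = ((n:ℝ) - 1) * (4 * t p) := by
      rw [Finset.sum_const, Finset.card_erase_of_mem (Finset.mem_univ p),
        Finset.card_univ, Fintype.card_fin, nsmul_eq_mul]
      have : ((n - 1 : ℕ) : ℝ) = (n:ℝ) - 1 := by
        have : 1 ≤ n := by omega
        push_cast [Nat.cast_sub this]
        ring
      rw [this]
    have c2 : ∑ q ∈ Finset.univ.erase p, 4 * t q = 4 * (0 - t p) := by
      rw [← Finset.mul_sum]
      have := Finset.add_sum_erase Finset.univ t (Finset.mem_univ p)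
      rw [F2] at this
      -- this : t p + ∑ q in erase, t q = 0
      have h2 : ∑ q ∈ Finset.univ.erase p, t q = 0 - t p := by linarith
      rw [h2]
    have c3 : ∑ q ∈ Finset.univ.erase p, 8 * BB p q = 8 * (t p - HH p) := by
      rw [← Finset.mul_sum]
      have := Finset.add_sum_erase Finset.univ (BB p) (Finset.mem_univ p)
      rw [F1 p] at this
      have h2 : ∑ q ∈ Finset.univ.erase p, BB p q = t p - HH p := by
        have hBBpp : BB p p = HH p := rfl
        rw [hBBpp] at this
        linarith
      rw [h2]
    rw [c1, c2, c3]; ring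
  have master : (∑ p, ∑ q ∈ Finset.univ.erase p, (4 * (t p + t q) - 8 * BB p q))
      + 8 * (∑ p, (t p - HH p)) = 0 := by
    rw [Finset.sum_congr rfl fun p _ => inner p]
    rw [Finset.sum_add_distrib, ← Finset.mul_sum, ← Finset.mul_sum, Finset.sum_sub_distrib,
      F2]
    ring
  -- conclude each part vanishes
  have part1 : 0 ≤ ∑ p, ∑ q ∈ Finset.univ.erase p, (4 * (t p + t q) - 8 * BB p q) :=
    Finset.sum_nonneg fun p _ => Finset.sum_nonneg fun q hq =>
      F4 p q (Ne.symm (Finset.mem_erase.mp hq).1)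
  have part2 : 0 ≤ ∑ p, (t p - HH p) := Finset.sum_nonneg fun p _ => F3 p
  have hpart1 : ∑ p, ∑ q ∈ Finset.univ.erase p, (4 * (t p + t q) - 8 * BB p q) = 0 := by
    linarith
  have hpart2 : ∑ p, (t p - HH p) = 0 := by linarith
  -- each term vanishes
  have G1 : ∀ p, t p = HH p := by
    intro p
    have := (Finset.sum_eq_zero_iff_of_nonneg fun p _ => F3 p).mp hpart2 p (Finset.mem_univ p)
    linarith
  have G2 : ∀ p q, p ≠ q → BB p q = (t p + t q) / 2 := by
    intro p q hpq
    have h0 := (Finset.sum_eq_zero_iff_of_nonneg fun p _ =>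
      Finset.sum_nonneg fun q hq => F4 p q (Ne.symm (Finset.mem_erase.mp hq).1)).mp
      hpart1 p (Finset.mem_univ p)
    have h1 := (Finset.sum_eq_zero_iff_of_nonneg fun q hq =>
      F4 p q (Ne.symm (Finset.mem_erase.mp hq).1)).mp h0 q
      (Finset.mem_erase.mpr ⟨Ne.symm hpq, Finset.mem_univ q⟩)
    linarith
  -- sum of HH vanishes
  have TH0 : ∑ p, HH p = 0 := by
    rw [← Finset.sum_congr rfl fun p _ => G1 p]
    exact F2
  -- erase-sum of BB is zero, gives (n-2) * HH k = 0
  have hBB0 : ∑ q ∈ Finset.univ.erase k, BB k q = 0 := by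
    have hadd := Finset.add_sum_erase Finset.univ (BB k) (Finset.mem_univ k)
    rw [F1 k] at hadd
    have hBBkk : BB k k = HH k := rfl
    have hG := G1 k
    rw [hBBkk] at hadd
    linarith
  have hstep : ∑ q ∈ Finset.univ.erase k, ((HH k + HH q) / 2) = 0 := by
    rw [← hBB0]
    refine (Finset.sum_congr rfl fun q hq => ?_).symm
    have hkq : k ≠ q := fun hh => (Finset.mem_erase.mp hq).1 hh.symm
    rw [G2 k q hkq, G1 k, G1 q]
  have hexp : ∑ q ∈ Finset.univ.erase k, ((HH k + HH q) / 2)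
      = (((n:ℝ) - 1) * (HH k / 2)) + (0 - HH k) / 2 := by
    have hsplit : ∑ q ∈ Finset.univ.erase k, ((HH k + HH q) / 2)
        = ∑ q ∈ Finset.univ.erase k, (HH k / 2 + HH q / 2) :=
      Finset.sum_congr rfl fun q _ => by ring
    rw [hsplit, Finset.sum_add_distrib]
    have c1 : ∑ _q ∈ Finset.univ.erase k, (HH k / 2) = ((n:ℝ) - 1) * (HH k / 2) := by
      rw [Finset.sum_const, Finset.card_erase_of_mem (Finset.mem_univ k),
        Finset.card_univ, Fintype.card_fin, nsmul_eq_mul]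
      have h1 : 1 ≤ n := by omega
      push_cast [Nat.cast_sub h1]
      ring
    have c2 : ∑ q ∈ Finset.univ.erase k, HH q / 2 = (0 - HH k) / 2 := by
      rw [← Finset.sum_div]
      have hadd := Finset.add_sum_erase Finset.univ HH (Finset.mem_univ k)
      rw [TH0] at hadd
      have h2 : ∑ q ∈ Finset.univ.erase k, HH q = 0 - HH k := by linarith
      rw [h2]
    rw [c1, c2]
  have final : ((n:ℝ) - 2) * HH k = 0 := by
    have hz := hstep
    rw [hexp] at hz
    linear_combination (2:ℝ) * hz
  have hn3 : (3:ℝ) ≤ (n:ℝ) := by exact_mod_cast hn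
  have hne : (n:ℝ) - 2 ≠ 0 := by linarith
  rcases mul_eq_zero.mp final with h' | h'
  · exact absurd h' hne
  · exact h'

end FrameFlat

/-! ### From unit vectors to everything -/

section Endgame

variable {n : ℕ} (T : AKCT n)

lemma H_zero_of_unit (hn : 3 ≤ n) (h : NQOBC T) (hS : scalarCurv T = 0)
    (V : Fin n → ℂ) (hV : hermInner V V = 1) : T.R V V V V = 0 := by
  classical
  have hnpos : 0 < n := by omega
  let E := EuclideanSpace ℂ (Fin n)
  let vE : E := (WithLp.equiv 2 (Fin n → ℂ)).symm V
  have hinner : ∀ (x y : Fin n → ℂ),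
      (inner ℂ ((WithLp.equiv 2 (Fin n → ℂ)).symm x) ((WithLp.equiv 2 (Fin n → ℂ)).symm y) : ℂ)
        = hermInner x y := by
    intro x y
    rw [PiLp.inner_apply]
    exact Finset.sum_congr rfl fun k _ => RCLike.inner_apply' _ _
  let k0 : Fin n := ⟨0, hnpos⟩
  have hcard : Module.finrank ℂ E = Fintype.card (Fin n) := by
    simp [E, finrank_euclideanSpace]
  have horth : Orthonormal ℂ (Set.restrict {k0} (fun _ : Fin n => vE)) := by
    rw [orthonormal_iff_ite]
    rintro ⟨i, hi⟩ ⟨j, hj⟩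
    simp only [Set.mem_singleton_iff] at hi hj
    have hij : (⟨i, by simp [hi]⟩ : ({k0} : Set (Fin n)))
        = (⟨j, by simp [hj]⟩ : ({k0} : Set (Fin n))) := Subtype.ext (hi.trans hj.symm)
    rw [if_pos (Subtype.ext (hi.trans hj.symm))]
    show (inner ℂ vE vE : ℂ) = 1
    rw [hinner V V]
    exact hV
  obtain ⟨b, hb⟩ := horth.exists_orthonormalBasis_extension_of_card_eq hcard
  let e : Fin n → Fin n → ℂ := fun p => WithLp.equiv 2 (Fin n → ℂ) (b p)
  have he : UnitaryFrame e := by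
    intro p q
    have ho := orthonormal_iff_ite.mp b.orthonormal p q
    rw [← hinner (e p) (e q)]
    simp only [e, Equiv.symm_apply_apply]
    exact ho
  have hek0 : e k0 = V := by
    show WithLp.equiv 2 (Fin n → ℂ) (b k0) = V
    rw [show b k0 = vE from hb k0 (Set.mem_singleton k0)]
    exact Equiv.apply_symm_apply _ V
  have hre := frame_H_re_zero T hn h hS he k0
  rw [hek0] at hre
  rw [← T.re_BB V V, hre]
  norm_num

lemma H_zero_all (hn : 3 ≤ n) (h : NQOBC T) (hS : scalarCurv T = 0)
    (X : Fin n → ℂ) : T.R X X X X = 0 := by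
  classical
  by_cases hX : X = 0
  · rw [hX]; exact T.zero_fst 0 0 0
  · -- normalize
    have hsum : hermInner X X = ((∑ k, Complex.normSq (X k) : ℝ) : ℂ) := by
      unfold hermInner
      push_cast
      refine Finset.sum_congr rfl fun k _ => ?_
      rw [← Complex.normSq_eq_conj_mul_self]
    have hnn : ∀ k, 0 ≤ Complex.normSq (X k) := fun k => Complex.normSq_nonneg _
    have hpos : 0 < ∑ k, Complex.normSq (X k) := by
      rcases lt_or_eq_of_le (Finset.sum_nonneg fun k _ => hnn k) with hlt | heq
      · exact hlt
      · exfalso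
        apply hX
        funext k
        have := (Finset.sum_eq_zero_iff_of_nonneg (fun k _ => hnn k)).mp heq.symm k
          (Finset.mem_univ k)
        exact Complex.normSq_eq_zero.mp this
    set r : ℝ := Real.sqrt (∑ k, Complex.normSq (X k)) with hr
    have hrpos : 0 < r := Real.sqrt_pos.mpr hpos
    have hr2 : r * r = ∑ k, Complex.normSq (X k) := Real.mul_self_sqrt (le_of_lt hpos)
    set V : Fin n → ℂ := ((r⁻¹ : ℝ) : ℂ) • X with hV
    have hVunit : hermInner V V = 1 := by
      rw [hV, hermInner_smul_left, hermInner_smul_right, Complex.conj_ofReal, hsum,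
        ← Complex.ofReal_mul, ← Complex.ofReal_mul]
      rw [show r⁻¹ * (r⁻¹ * (∑ k, Complex.normSq (X k))) = 1 from by
        rw [← hr2]
        field_simp]
      norm_num
    have hXV : X = ((r : ℝ) : ℂ) • V := by
      rw [hV, smul_smul]
      rw [show ((r:ℝ):ℂ) * ((r⁻¹:ℝ):ℂ) = (((r * r⁻¹ : ℝ)):ℂ) by push_cast; ring]
      rw [mul_inv_cancel₀ (ne_of_gt hrpos)]
      norm_num
    have h0 := H_zero_of_unit T hn h hS V hVunit
    rw [hXV, T.smul_fst, T.smul_snd, T.smul_trd, T.smul_fth, Complex.conj_ofReal, h0]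
    ring

end Endgame

/-- Theorem 3.1, `n ≥ 3`: NQOBC together with vanishing scalar
curvature implies the curvature tensor vanishes identically. -/
theorem stmt13 (n : ℕ) (hn : 3 ≤ n) (𝓡 : AKCT n) (h : NQOBC 𝓡)
    (hS : scalarCurv 𝓡 = 0) :
    ∀ X Y Z W : Fin n → ℂ, 𝓡.R X Y Z W = 0 := by
  have hH : ∀ X, 𝓡.R X X X X = 0 := H_zero_all 𝓡 hn h hS
  -- step 1 : bisectional vanishing
  have hB : ∀ X Z, 𝓡.R X X Z Z = 0 := by
    intro X Z
    have hl2 := L2 𝓡 Complex.I_mul_I Complex.conj_I X Z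
    rw [hH, hH, hH, hH, hH, hH] at hl2
    linear_combination (-1/16 : ℂ) * hl2
  -- step 2 : R X Y Z Z = 0
  have hXYZZ : ∀ X Y Z, 𝓡.R X Y Z Z = 0 := by
    intro X Y Z
    have e1 : 𝓡.R (X + (1:ℂ) • Y) (X + (1:ℂ) • Y) Z Z = 0 := hB _ _
    have eI : 𝓡.R (X + Complex.I • Y) (X + Complex.I • Y) Z Z = 0 := hB _ _
    simp only [𝓡.add_fst, 𝓡.add_snd, 𝓡.smul_fst, 𝓡.smul_snd, map_one, Complex.conj_I]
      at e1 eI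
    rw [hB X Z, hB Y Z] at e1 eI
    -- e1 : R Y X Z Z + R X Y Z Z = 0 (w/ coefficients), eI with I coefficients
    linear_combination (1/2 : ℂ) * e1 + (Complex.I/2) * eI
      + ((𝓡.R X Y Z Z - 𝓡.R Y X Z Z)/2) * Complex.I_mul_I
  -- step 3 : full polarization
  intro X Y Z W
  have e1 : 𝓡.R X Y (Z + (1:ℂ) • W) (Z + (1:ℂ) • W) = 0 := hXYZZ _ _ _
  have eI : 𝓡.R X Y (Z + Complex.I • W) (Z + Complex.I • W) = 0 := hXYZZ _ _ _
  simp only [𝓡.add_trd, 𝓡.add_fth, 𝓡.smul_trd, 𝓡.smul_fth, map_one, Complex.conj_I] at e1 eI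
  rw [hXYZZ X Y Z, hXYZZ X Y W] at e1 eI
  linear_combination (1/2 : ℂ) * e1 + (Complex.I/2) * eI
    + ((𝓡.R X Y Z W - 𝓡.R X Y W Z)/2) * Complex.I_mul_I

end
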